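/- (Worst-case reduction.) For any given incentive profile u (edge and base node costs nonnegative, continuous, nondecreasing), the supremum of the social cost C(f,u) over all Wardrop equilibrium flows f equals its infimum over all Wardrop equilibrium flows; hence the worst-case equilibrium social cost in the incentive design problem equals the social cost of any single equilibrium flow. -/
import Mathlib


open Set MeasureTheory intervalIntegral

section RoutingGame

variable {E V P : Type*} [Fintype E] [Fintype V] [Fintype P] [Nonempty P]
  [DecidableEq E] [DecidableEq V]

/-- Edge flow: total flow of paths containing edge `e`. -/
noncomputable def edgeFlow (pathE : P → Finset E) (f : P → ℝ) (e : E) : ℝ :=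
  ∑ p ∈ Finset.univ.filter (fun p => e ∈ pathE p), f p

/-- Node flow: total flow of paths containing node `v`. -/
noncomputable def nodeFlow (pathV : P → Finset V) (f : P → ℝ) (v : V) : ℝ :=
  ∑ p ∈ Finset.univ.filter (fun p => v ∈ pathV p), f p

/-- Feasible flows: nonnegative, summing to one. -/
def Feasible (f : P → ℝ) : Prop := (∀ p, 0 ≤ f p) ∧ ∑ p, f p = 1

/-- Path cost with additive path-specific node incentives. -/
noncomputable def pathCost (pathE : P → Finset E) (pathV : P → Finset V)
    (ce : E → ℝ → ℝ) (cv : V → ℝ → ℝ) (u : V → P → ℝ) (f : P → ℝ) (p : P) : ℝ :=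
  (∑ e ∈ pathE p, ce e (edgeFlow pathE f e)) +
  (∑ v ∈ pathV p, (cv v (nodeFlow pathV f v) + u v p))

/-- Wardrop equilibrium: every used path has minimal cost. -/
def IsWardrop (pathE : P → Finset E) (pathV : P → Finset V)
    (ce : E → ℝ → ℝ) (cv : V → ℝ → ℝ) (u : V → P → ℝ) (f : P → ℝ) : Prop :=
  ∀ p q : P, 0 < f p →
    pathCost pathE pathV ce cv u f p ≤ pathCost pathE pathV ce cv u f q

/-- The potential function `Φ(f,u)`. -/
noncomputable def potential (pathE : P → Finset E) (pathV : P → Finset V)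
    (ce : E → ℝ → ℝ) (cv : V → ℝ → ℝ) (u : V → P → ℝ) (f : P → ℝ) : ℝ :=
  (∑ e, ∫ s in (0:ℝ)..(edgeFlow pathE f e), ce e s) +
  (∑ v, ∫ s in (0:ℝ)..(nodeFlow pathV f v), cv v s) +
  (∑ p, f p * ∑ v ∈ pathV p, u v p)

/-- Social cost. -/
noncomputable def socialCost (pathE : P → Finset E) (pathV : P → Finset V)
    (ce : E → ℝ → ℝ) (cv : V → ℝ → ℝ) (u : V → P → ℝ) (f : P → ℝ) : ℝ :=
  ∑ p, f p * pathCost pathE pathV ce cv u f p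


/-- Auxiliary: partial sums of a feasible flow lie in `[0,1]`. -/
lemma aux_filter_sum_mem {f : P → ℝ} (hf : Feasible f) (s : Finset P) :
    (∑ p ∈ s, f p) ∈ Set.Icc (0:ℝ) 1 := by
  constructor
  · exact Finset.sum_nonneg fun p _ => hf.1 p
  · rw [← hf.2]
    exact Finset.sum_le_sum_of_subset_of_nonneg (Finset.subset_univ s)
      (fun p _ _ => hf.1 p)

lemma aux_exists_used {f : P → ℝ} (hf : Feasible f) : ∃ p, 0 < f p := by
  by_contra h
  push_neg at h
  have h0 : ∑ p, f p = 0 := Finset.sum_eq_zero fun p _ => le_antisymm (h p) (hf.1 p)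
  rw [hf.2] at h0; norm_num at h0

/-- Auxiliary: swapping a double sum over paths and edges. -/
lemma aux_swap {E' : Type*} [Fintype E'] [DecidableEq E']
    (pathE : P → Finset E') (a : E' → ℝ) (h : P → ℝ) :
    ∑ p, h p * ∑ e ∈ pathE p, a e =
      ∑ e, a e * ∑ p ∈ Finset.univ.filter (fun p => e ∈ pathE p), h p := by
  have L : ∀ p : P, h p * ∑ e ∈ pathE p, a e
      = ∑ e, if e ∈ pathE p then h p * a e else 0 := by
    intro p
    rw [Finset.mul_sum, Finset.sum_ite_mem, Finset.univ_inter]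
  simp_rw [L, Finset.sum_filter]
  rw [Finset.sum_comm]
  apply Finset.sum_congr rfl
  intro e _
  rw [Finset.mul_sum]
  apply Finset.sum_congr rfl
  intro p _
  split <;> ring

/-- At a Wardrop equilibrium, the social cost equals the cost of any used path. -/
lemma aux_socialCost_eq_used (pathE : P → Finset E) (pathV : P → Finset V)
    (ce : E → ℝ → ℝ) (cv : V → ℝ → ℝ) (u : V → P → ℝ) {f : P → ℝ}
    (hf : Feasible f) (hW : IsWardrop pathE pathV ce cv u f)
    {p₀ : P} (hp₀ : 0 < f p₀) :
    socialCost pathE pathV ce cv u f = pathCost pathE pathV ce cv u f p₀ := by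
  unfold socialCost
  have key : ∀ p : P, f p * pathCost pathE pathV ce cv u f p
      = f p * pathCost pathE pathV ce cv u f p₀ := by
    intro p
    rcases (hf.1 p).lt_or_eq with hp | hp
    · rw [le_antisymm (hW p p₀ hp) (hW p₀ p hp₀)]
    · rw [← hp]; ring
  rw [Finset.sum_congr rfl fun p _ => key p, ← Finset.sum_mul, hf.2, one_mul]

/-- Variational inequality for a Wardrop equilibrium. -/
lemma aux_VI (pathE : P → Finset E) (pathV : P → Finset V)
    (ce : E → ℝ → ℝ) (cv : V → ℝ → ℝ) (u : V → P → ℝ) {f g : P → ℝ}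
    (hf : Feasible f) (hW : IsWardrop pathE pathV ce cv u f) (hg : Feasible g) :
    ∑ p, f p * pathCost pathE pathV ce cv u f p ≤
      ∑ p, g p * pathCost pathE pathV ce cv u f p := by
  obtain ⟨p₀, hp₀⟩ := aux_exists_used hf
  have h1 : ∑ p, f p * pathCost pathE pathV ce cv u f p
      = pathCost pathE pathV ce cv u f p₀ := aux_socialCost_eq_used pathE pathV ce cv u hf hW hp₀
  rw [h1]
  calc pathCost pathE pathV ce cv u f p₀
      = ∑ p, g p * pathCost pathE pathV ce cv u f p₀ := by
        rw [← Finset.sum_mul, hg.2, one_mul]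
    _ ≤ ∑ p, g p * pathCost pathE pathV ce cv u f p :=
        Finset.sum_le_sum fun p _ =>
          mul_le_mul_of_nonneg_left (hW p₀ p hp₀) (hg.1 p)

/-- Social cost is constant over Wardrop equilibria. -/
lemma aux_socialCost_const (pathE : P → Finset E) (pathV : P → Finset V)
    (ce : E → ℝ → ℝ) (cv : V → ℝ → ℝ) (u : V → P → ℝ)
    (hce_mono : ∀ e, MonotoneOn (ce e) (Set.Icc (0:ℝ) 1))
    (hcv_mono : ∀ v, MonotoneOn (cv v) (Set.Icc (0:ℝ) 1))
    {f g : P → ℝ} (hf : Feasible f) (hWf : IsWardrop pathE pathV ce cv u f)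
    (hg : Feasible g) (hWg : IsWardrop pathE pathV ce cv u g) :
    socialCost pathE pathV ce cv u f = socialCost pathE pathV ce cv u g := by
  set cp := pathCost pathE pathV ce cv u with hcp
  -- pointwise difference of path costs
  have hpt : ∀ p, cp f p - cp g p
      = (∑ e ∈ pathE p, (ce e (edgeFlow pathE f e) - ce e (edgeFlow pathE g e)))
      + (∑ v ∈ pathV p, (cv v (nodeFlow pathV f v) - cv v (nodeFlow pathV g v))) := by
    intro p
    simp only [hcp, pathCost, Finset.sum_sub_distrib, Finset.sum_add_distrib]
    ring
  -- decomposition of the scalar product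
  have hEflow : ∀ e, ∑ p ∈ Finset.univ.filter (fun p => e ∈ pathE p), (f p - g p)
      = edgeFlow pathE f e - edgeFlow pathE g e := by
    intro e; rw [edgeFlow, edgeFlow, Finset.sum_sub_distrib]
  have hVflow : ∀ v, ∑ p ∈ Finset.univ.filter (fun p => v ∈ pathV p), (f p - g p)
      = nodeFlow pathV f v - nodeFlow pathV g v := by
    intro v; rw [nodeFlow, nodeFlow, Finset.sum_sub_distrib]
  have decomp : ∑ p, (f p - g p) * (cp f p - cp g p)
      = (∑ e, (ce e (edgeFlow pathE f e) - ce e (edgeFlow pathE g e))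
            * (edgeFlow pathE f e - edgeFlow pathE g e))
      + (∑ v, (cv v (nodeFlow pathV f v) - cv v (nodeFlow pathV g v))
            * (nodeFlow pathV f v - nodeFlow pathV g v)) := by
    simp_rw [fun p => hpt p, mul_add, Finset.sum_add_distrib]
    rw [aux_swap pathE _ (fun p => f p - g p), aux_swap pathV _ (fun p => f p - g p)]
    simp_rw [hEflow, hVflow]
  -- each term of the decomposition is nonnegative, by monotonicity
  have hfE : ∀ e, edgeFlow pathE f e ∈ Set.Icc (0:ℝ) 1 := fun e => aux_filter_sum_mem hf _
  have hgE : ∀ e, edgeFlow pathE g e ∈ Set.Icc (0:ℝ) 1 := fun e => aux_filter_sum_mem hg _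
  have hfV : ∀ v, nodeFlow pathV f v ∈ Set.Icc (0:ℝ) 1 := fun v => aux_filter_sum_mem hf _
  have hgV : ∀ v, nodeFlow pathV g v ∈ Set.Icc (0:ℝ) 1 := fun v => aux_filter_sum_mem hg _
  have mono_nn : ∀ (c : ℝ → ℝ), MonotoneOn c (Set.Icc (0:ℝ) 1) →
      ∀ x ∈ Set.Icc (0:ℝ) 1, ∀ y ∈ Set.Icc (0:ℝ) 1, 0 ≤ (c x - c y) * (x - y) := by
    intro c hc x hx y hy
    rcases le_total x y with h | h
    · nlinarith [hc hx hy h]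
    · nlinarith [hc hy hx h]
  have hEnn : ∀ e, 0 ≤ (ce e (edgeFlow pathE f e) - ce e (edgeFlow pathE g e))
      * (edgeFlow pathE f e - edgeFlow pathE g e) :=
    fun e => mono_nn (ce e) (hce_mono e) _ (hfE e) _ (hgE e)
  have hVnn : ∀ v, 0 ≤ (cv v (nodeFlow pathV f v) - cv v (nodeFlow pathV g v))
      * (nodeFlow pathV f v - nodeFlow pathV g v) :=
    fun v => mono_nn (cv v) (hcv_mono v) _ (hfV v) _ (hgV v)
  -- variational inequalities
  have VI1 := aux_VI pathE pathV ce cv u hf hWf hg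
  have VI2 := aux_VI pathE pathV ce cv u hg hWg hf
  have expand : ∑ p, (f p - g p) * (cp f p - cp g p)
      = ((∑ p, f p * cp f p) - (∑ p, g p * cp f p))
      + ((∑ p, g p * cp g p) - (∑ p, f p * cp g p)) := by
    rw [show (∑ p, (f p - g p) * (cp f p - cp g p))
        = ∑ p, (f p * cp f p - g p * cp f p + (g p * cp g p - f p * cp g p)) from
      Finset.sum_congr rfl (fun p _ => by ring)]
    rw [Finset.sum_add_distrib, Finset.sum_sub_distrib, Finset.sum_sub_distrib]
  have hle : ∑ p, (f p - g p) * (cp f p - cp g p) ≤ 0 := by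
    rw [expand]; unfold cp; linarith
  have hEsum : 0 ≤ ∑ e, (ce e (edgeFlow pathE f e) - ce e (edgeFlow pathE g e))
      * (edgeFlow pathE f e - edgeFlow pathE g e) := Finset.sum_nonneg fun e _ => hEnn e
  have hVsum : 0 ≤ ∑ v, (cv v (nodeFlow pathV f v) - cv v (nodeFlow pathV g v))
      * (nodeFlow pathV f v - nodeFlow pathV g v) := Finset.sum_nonneg fun v _ => hVnn v
  have hEzero : ∑ e, (ce e (edgeFlow pathE f e) - ce e (edgeFlow pathE g e))
      * (edgeFlow pathE f e - edgeFlow pathE g e) = 0 := by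
    rw [decomp] at hle; linarith
  have hVzero : ∑ v, (cv v (nodeFlow pathV f v) - cv v (nodeFlow pathV g v))
      * (nodeFlow pathV f v - nodeFlow pathV g v) = 0 := by
    rw [decomp] at hle; linarith
  -- hence all edge and node costs coincide
  have hEeq : ∀ e, ce e (edgeFlow pathE f e) = ce e (edgeFlow pathE g e) := by
    intro e
    have := (Finset.sum_eq_zero_iff_of_nonneg (fun e _ => hEnn e)).mp hEzero e
      (Finset.mem_univ e)
    rcases mul_eq_zero.mp this with h | h
    · linarith [sub_eq_zero.mp h]
    · rw [sub_eq_zero.mp h]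
  have hVeq : ∀ v, cv v (nodeFlow pathV f v) = cv v (nodeFlow pathV g v) := by
    intro v
    have := (Finset.sum_eq_zero_iff_of_nonneg (fun v _ => hVnn v)).mp hVzero v
      (Finset.mem_univ v)
    rcases mul_eq_zero.mp this with h | h
    · linarith [sub_eq_zero.mp h]
    · rw [sub_eq_zero.mp h]
  -- hence all path costs coincide
  have hcpeq : ∀ p, cp f p = cp g p := by
    intro p
    have := hpt p
    have hz : cp f p - cp g p = 0 := by
      rw [this]
      rw [Finset.sum_eq_zero fun e _ => by rw [hEeq e]; ring,
        Finset.sum_eq_zero fun v _ => by rw [hVeq v]; ring]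
      ring
    linarith
  -- conclude
  obtain ⟨p₀, hp₀⟩ := aux_exists_used hf
  obtain ⟨q₀, hq₀⟩ := aux_exists_used hg
  have h1 : socialCost pathE pathV ce cv u f = cp f p₀ :=
    aux_socialCost_eq_used pathE pathV ce cv u hf hWf hp₀
  have h2 : socialCost pathE pathV ce cv u g = cp g q₀ :=
    aux_socialCost_eq_used pathE pathV ce cv u hg hWg hq₀
  have h3 : cp f p₀ ≤ cp f q₀ := hWf p₀ q₀ hp₀
  have h4 : cp g q₀ ≤ cp g p₀ := hWg q₀ p₀ hq₀
  have h5 := hcpeq q₀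
  have h6 := hcpeq p₀
  rw [h1, h2]; linarith

/-- **Worst-case reduction.** The supremum of the social cost over Wardrop
equilibrium flows equals its infimum; hence the worst-case equilibrium social cost equals
the social cost of any single equilibrium flow. -/
theorem worst_case_equilibrium_reduction
    (pathE : P → Finset E) (pathV : P → Finset V)
    (ce : E → ℝ → ℝ) (cv : V → ℝ → ℝ) (u : V → P → ℝ)
    (hce_nn : ∀ e, ∀ x ∈ Set.Icc (0:ℝ) 1, 0 ≤ ce e x)
    (hce_cont : ∀ e, ContinuousOn (ce e) (Set.Icc (0:ℝ) 1))
    (hce_mono : ∀ e, MonotoneOn (ce e) (Set.Icc (0:ℝ) 1))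
    (hcv_nn : ∀ v, ∀ x ∈ Set.Icc (0:ℝ) 1, 0 ≤ cv v x)
    (hcv_cont : ∀ v, ContinuousOn (cv v) (Set.Icc (0:ℝ) 1))
    (hcv_mono : ∀ v, MonotoneOn (cv v) (Set.Icc (0:ℝ) 1))
 :
    sSup (socialCost pathE pathV ce cv u ''
        {f : P → ℝ | Feasible f ∧ IsWardrop pathE pathV ce cv u f}) =
      sInf (socialCost pathE pathV ce cv u ''
        {f : P → ℝ | Feasible f ∧ IsWardrop pathE pathV ce cv u f}) ∧
    ∀ f : P → ℝ, Feasible f → IsWardrop pathE pathV ce cv u f →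
      socialCost pathE pathV ce cv u f =
        sSup (socialCost pathE pathV ce cv u ''
          {g : P → ℝ | Feasible g ∧ IsWardrop pathE pathV ce cv u g}) := by

  set S := socialCost pathE pathV ce cv u ''
      {f : P → ℝ | Feasible f ∧ IsWardrop pathE pathV ce cv u f} with hS
  rcases Set.eq_empty_or_nonempty
      {f : P → ℝ | Feasible f ∧ IsWardrop pathE pathV ce cv u f} with hemp | hne
  · have : S = ∅ := by rw [hS, hemp, Set.image_empty]
    constructor
    · rw [this, Real.sSup_empty, Real.sInf_empty]
    · intro f hf hW
      have hmem : f ∈ {f : P → ℝ | Feasible f ∧ IsWardrop pathE pathV ce cv u f} :=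
        ⟨hf, hW⟩
      rw [hemp] at hmem
      exact hmem.elim
  · obtain ⟨f₀, hf₀⟩ := hne
    have hsingle : S = {socialCost pathE pathV ce cv u f₀} := by
      apply Set.eq_singleton_iff_unique_mem.mpr
      constructor
      · exact ⟨f₀, hf₀, rfl⟩
      · rintro x ⟨g, hg, rfl⟩
        exact aux_socialCost_const pathE pathV ce cv u hce_mono hcv_mono hg.1 hg.2
          hf₀.1 hf₀.2
    constructor
    · rw [hsingle, csSup_singleton, csInf_singleton]
    · intro f hf hW
      rw [hsingle, csSup_singleton]
      exact aux_socialCost_const pathE pathV ce cv u hce_mono hcv_mono hf hW hf₀.1 hf₀.2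


end RoutingGame
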